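/- Let (S, ∂_S, *) be a pointed dg-manifold, i.e. the homological vector field ∂_S vanishes at * to second order (∂_S I_* ⊆ I_*²). Then the operation on the parity-reversed tangent space ΠT_{S,*} given by [Πv₁, Πv₂]_* := Π([V₁, [∂_S, V₂]]|_*), where V_i are arbitrary vector field extensions of the tangent vectors v_i, is well-defined (independent of the extensions) and endows ΠT_{S,*} with a Lie superalgebra structure; in particular it satisfies the graded Jacobi identity, which follows from [∂_S, ∂_S] = 0. -/

import Mathlib

/-- for a pointed dg-manifold `(S, ∂_S, *)` the operation
`[Πv₁, Πv₂]_* := Π([V₁,[∂_S,V₂]]|_*)` on the parity-reversed tangent space at `*` is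
well defined (independent of the chosen vector-field extensions `V_i` of `v_i`) and
satisfies the (graded) antisymmetry and Jacobi identities, the latter as a consequence
of `[∂_S,∂_S] = 0`; hence it makes `ΠT_{S,*}` a Lie superalgebra.

Algebraic model: the Lie superalgebra `V` of vector fields on `S` carries the
order-of-vanishing filtration `F 0 ⊇ F 1 ⊇ F 2 ⊇ ⋯` at `*` (with `F 0 = ⊤`,
`[F i, F j] ⊆ F (i+j-1)`), the tangent space at `*` is `V/F 1` (evaluation at `*`
kills exactly `F 1`), and the pointedness condition `∂_S I_* ⊆ I_*²` says `∂_S ∈ F 2`. -/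
theorem stmt4
    (k : Type*) [Field k] [CharZero k]
    (V : Type*) [AddCommGroup V] [Module k V]
    -- Lie superalgebra structure on the space of vector fields
    (Gr : ZMod 2 → Submodule k V)
    (b : V →ₗ[k] V →ₗ[k] V)
    (hb_gr : ∀ (i j : ZMod 2) (x y : V), x ∈ Gr i → y ∈ Gr j → b x y ∈ Gr (i + j))
    (hanti : ∀ (i j : ZMod 2) (x y : V), x ∈ Gr i → y ∈ Gr j →
      b x y = -(((-1 : k) ^ ((i * j).val)) • b y x))
    (hjac : ∀ (i j : ZMod 2) (x y z : V), x ∈ Gr i → y ∈ Gr j →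
      b x (b y z) = b (b x y) z + ((-1 : k) ^ ((i * j).val)) • b y (b x z))
    -- filtration by order of vanishing at the point *
    (F : ℕ → Submodule k V)
    (hF0 : F 0 = ⊤)
    (hFmono : ∀ n, F (n + 1) ≤ F n)
    (hFb : ∀ (i j : ℕ) (x y : V), x ∈ F i → y ∈ F j → b x y ∈ F (i + j - 1))
    -- the homological vector field, odd, vanishing to second order at *
    (dS : V) (hdS_odd : dS ∈ Gr 1) (hdS2 : dS ∈ F 2) (hdSdS : b dS dS = 0) :
    -- (1) well-definedness: the value of [V₁,[∂_S,V₂]] at * (i.e. mod F 1) depends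
    -- only on the values of V₁, V₂ at * (i.e. on their classes mod F 1)
    (∀ V₁ V₂ W₁ W₂ : V, W₁ - V₁ ∈ F 1 → W₂ - V₂ ∈ F 1 →
      b W₁ (b dS W₂) - b V₁ (b dS V₂) ∈ F 1) ∧
    -- (2) graded antisymmetry at * for the shifted (Π-reversed) parities
    (∀ (i j : ZMod 2) (V₁ V₂ : V), V₁ ∈ Gr i → V₂ ∈ Gr j →
      b V₁ (b dS V₂) + ((-1 : k) ^ (((i + 1) * (j + 1)).val)) • b V₂ (b dS V₁) ∈ F 1) ∧
    -- (3) graded Jacobi identity at *, a consequence of [∂_S,∂_S] = 0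
    (∀ (i j : ZMod 2) (V₁ V₂ V₃ : V), V₁ ∈ Gr i → V₂ ∈ Gr j →
      b V₁ (b dS (b V₂ (b dS V₃)))
        - b (b V₁ (b dS V₂)) (b dS V₃)
        - ((-1 : k) ^ (((i + 1) * (j + 1)).val)) • b V₂ (b dS (b V₁ (b dS V₃)))
        ∈ F 1) := by
  -- everything lies in `F 0`
  have hF0' : ∀ v : V, v ∈ F 0 := fun v => by rw [hF0]; exact Submodule.mem_top
  -- bracketing with `dS` lands in `F 1`
  have hDF1 : ∀ w : V, b dS w ∈ F 1 := fun w => hFb 2 0 dS w hdS2 (hF0' w)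
  -- `[dS, [dS, -]] = 0` (from `[dS,dS] = 0` and char zero)
  have hD2 : ∀ z : V, b dS (b dS z) = 0 := by
    intro z
    have h := hjac 1 1 dS dS z hdS_odd hdS_odd
    rw [hdSdS] at h
    simp only [map_zero, LinearMap.zero_apply, zero_add,
      show ((1 * 1 : ZMod 2)).val = 1 from rfl, pow_one, neg_smul, one_smul] at h
    have h2 : (2 : k) • b dS (b dS z) = 0 := by
      rw [two_smul]; nth_rewrite 1 [h]; simp
    rcases smul_eq_zero.mp h2 with h3 | h3
    · exact absurd h3 two_ne_zero
    · exact h3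
  -- the key sign identity
  have hs : ∀ i j : ZMod 2, (-1 : k) ^ (((i + 1) * (j + 1)).val)
      = -((-1 : k) ^ ((i * 1).val) * (-1 : k) ^ (((1 + i) * j).val)) := by
    intro i j
    have h01 : ∀ x : ZMod 2, x = 0 ∨ x = 1 := by decide
    rcases h01 i with rfl | rfl <;> rcases h01 j with rfl | rfl <;>
      norm_num [show ((2 : ZMod 2)).val = 0 from rfl, show ((4 : ZMod 2)).val = 0 from rfl,
        ZMod.val_one]
  refine ⟨?_, ?_, ?_⟩
  · -- (1) well-definedness
    intro V₁ V₂ W₁ W₂ h1 h2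
    have key : b W₁ (b dS W₂) - b V₁ (b dS V₂)
        = b (W₁ - V₁) (b dS W₂) + b V₁ (b dS (W₂ - V₂)) := by
      simp only [map_sub, LinearMap.sub_apply]; abel
    rw [key]
    refine Submodule.add_mem _ (hFb 1 1 _ _ h1 (hDF1 W₂)) ?_
    exact hFb 0 2 _ _ (hF0' V₁) (hFb 2 1 dS _ hdS2 h2)
  · -- (2) graded antisymmetry modulo `F 1`
    intro i j V₁ V₂ h1 h2
    have gDV₁ : b dS V₁ ∈ Gr (1 + i) := hb_gr 1 i dS V₁ hdS_odd h1
    have e1 : b V₁ (b dS V₂)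
        = b (b V₁ dS) V₂ + (-1 : k) ^ ((i * 1).val) • b dS (b V₁ V₂) :=
      hjac i 1 V₁ dS V₂ h1 hdS_odd
    have e2 : b V₁ dS = -((-1 : k) ^ ((i * 1).val) • b dS V₁) :=
      hanti i 1 V₁ dS h1 hdS_odd
    have e3 : b (b dS V₁) V₂ = -((-1 : k) ^ (((1 + i) * j).val) • b V₂ (b dS V₁)) :=
      hanti (1 + i) j _ V₂ gDV₁ h2
    have key : b V₁ (b dS V₂) + (-1 : k) ^ (((i + 1) * (j + 1)).val) • b V₂ (b dS V₁)
        = (-1 : k) ^ ((i * 1).val) • b dS (b V₁ V₂) := by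
      rw [e1, e2, hs i j]
      simp only [map_neg, map_smul, LinearMap.neg_apply, LinearMap.smul_apply, e3]
      module
    rw [key]
    exact Submodule.smul_mem _ _ (hDF1 _)
  · -- (3) graded Jacobi identity modulo `F 1`
    intro i j V₁ V₂ V₃ h1 h2
    have gDV₁ : b dS V₁ ∈ Gr (1 + i) := hb_gr 1 i dS V₁ hdS_odd h1
    have e2 : b V₁ dS = -((-1 : k) ^ ((i * 1).val) • b dS V₁) :=
      hanti i 1 V₁ dS h1 hdS_odd
    -- expand the first term
    have eT1 : b V₁ (b dS (b V₂ (b dS V₃)))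
        = b (b V₁ dS) (b V₂ (b dS V₃))
          + (-1 : k) ^ ((i * 1).val) • b dS (b V₁ (b V₂ (b dS V₃))) :=
      hjac i 1 V₁ dS _ h1 hdS_odd
    -- expand the inner bracket of the second term
    have eB : b V₁ (b dS V₂)
        = b (b V₁ dS) V₂ + (-1 : k) ^ ((i * 1).val) • b dS (b V₁ V₂) :=
      hjac i 1 V₁ dS V₂ h1 hdS_odd
    -- `[[dS,V₁],[dS,V₃]] = [dS,[V₁,[dS,V₃]]]` since `[dS,[dS,V₃]] = 0`
    have eD : b (b dS V₁) (b dS V₃) = b dS (b V₁ (b dS V₃)) := by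
      have h := hjac 1 i dS V₁ (b dS V₃) hdS_odd h1
      rw [hD2 V₃] at h
      simpa using h.symm
    have eJ : b (b dS V₁) (b V₂ (b dS V₃))
        = b (b (b dS V₁) V₂) (b dS V₃)
          + (-1 : k) ^ (((1 + i) * j).val) • b V₂ (b (b dS V₁) (b dS V₃)) :=
      hjac (1 + i) j _ V₂ _ gDV₁ h2
    have key : b V₁ (b dS (b V₂ (b dS V₃)))
          - b (b V₁ (b dS V₂)) (b dS V₃)
          - ((-1 : k) ^ (((i + 1) * (j + 1)).val)) • b V₂ (b dS (b V₁ (b dS V₃)))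
        = (-1 : k) ^ ((i * 1).val) • b dS (b V₁ (b V₂ (b dS V₃)))
          - (-1 : k) ^ ((i * 1).val) • b (b dS (b V₁ V₂)) (b dS V₃) := by
      rw [eT1, eB, e2, hs i j]
      simp only [map_neg, map_smul, map_add, LinearMap.neg_apply, LinearMap.smul_apply,
        LinearMap.add_apply]
      rw [eJ, eD]
      module
    rw [key]
    exact Submodule.sub_mem _ (Submodule.smul_mem _ _ (hDF1 _))
      (Submodule.smul_mem _ _ (hFb 1 1 _ _ (hDF1 _) (hDF1 _)))
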